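/- Fix $N$ and regard bijections $\sigma : [N] \to [N]$ as sets of cells $(i, \sigma(i))$ in an $N \times N$ array. A pattern is a set of cells, no two in the same row or column; patterns $X, Y$ are adjacent if some row or column meets both. Let $\boldsymbol{\sigma}$ be a uniformly random bijection and for a pattern $X$ let $A_X = \{\boldsymbol{\sigma} \supseteq X\}$. If $X, X_1, \dots, X_t$ are patterns with $X$ not adjacent to any $X_i$, then $\mathbb{P}(A_X \mid \bigwedge_{i=1}^t \overline{A_{X_i}}) \le \mathbb{P}(A_X)$. -/

import Mathlib

open scoped Classical BigOperators

namespace Stmt4Aux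

variable {N : ℕ}

/-- pattern property -/
def IsPattern (X : Finset (Fin N × Fin N)) : Prop :=
  ∀ c ∈ X, ∀ c' ∈ X, c ≠ c' → c.1 ≠ c'.1 ∧ c.2 ≠ c'.2

/-- the column paired with row `r` in the pattern `X` (junk if `r` is not a row of `X`). -/
noncomputable def colOf (X : Finset (Fin N × Fin N)) (r : Fin N) : Fin N :=
  if h : ∃ p ∈ X, p.1 = r then h.choose.2 else r

lemma colOf_pair {X : Finset (Fin N × Fin N)} {r : Fin N}
    (hr : r ∈ X.image Prod.fst) : (r, colOf X r) ∈ X := by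
  obtain ⟨p, hp, hpr⟩ := Finset.mem_image.mp hr
  have h : ∃ p ∈ X, p.1 = r := ⟨p, hp, hpr⟩
  have hs := h.choose_spec
  rw [colOf, dif_pos h]
  have : (r, h.choose.2) = h.choose := by ext <;> simp [hs.2]
  rw [this]; exact hs.1

lemma colOf_spec {X : Finset (Fin N × Fin N)} (hX : IsPattern X) {c : Fin N × Fin N}
    (hc : c ∈ X) : colOf X c.1 = c.2 := by
  have hr : c.1 ∈ X.image Prod.fst := Finset.mem_image_of_mem _ hc
  have h1 : (c.1, colOf X c.1) ∈ X := colOf_pair hr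
  by_contra hne
  have hne' : (c.1, colOf X c.1) ≠ c := by
    intro h; apply hne; rw [← h]
  exact (hX _ h1 _ hc hne').1 rfl

lemma colOf_mem {X : Finset (Fin N × Fin N)} {r : Fin N}
    (hr : r ∈ X.image Prod.fst) : colOf X r ∈ X.image Prod.snd :=
  Finset.mem_image_of_mem Prod.snd (colOf_pair hr)

lemma colOf_injOn {X : Finset (Fin N × Fin N)} (hX : IsPattern X) {r₁ r₂ : Fin N}
    (h₁ : r₁ ∈ X.image Prod.fst) (h₂ : r₂ ∈ X.image Prod.fst)
    (h : colOf X r₁ = colOf X r₂) : r₁ = r₂ := by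
  by_contra hne
  have p₁ := colOf_pair h₁
  have p₂ := colOf_pair h₂
  have hpne : (r₁, colOf X r₁) ≠ (r₂, colOf X r₂) := by
    intro hh; exact hne (congrArg Prod.fst hh)
  exact (hX _ p₁ _ p₂ hpne).2 h

/-- a canonical bijection `A → B` between two finsets of the same size (junk otherwise). -/
noncomputable def gfun (A B : Finset (Fin N)) (x : Fin N) : Fin N :=
  if h : A.card = B.card then
    if hx : x ∈ A then (Finset.equivOfCardEq h ⟨x, hx⟩ : Fin N) else x
  else x

lemma gfun_mem {A B : Finset (Fin N)} (h : A.card = B.card) {x : Fin N} (hx : x ∈ A) :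
    gfun A B x ∈ B := by
  rw [gfun, dif_pos h, dif_pos hx]
  exact (Finset.equivOfCardEq h ⟨x, hx⟩).2

lemma gfun_injOn {A B : Finset (Fin N)} (h : A.card = B.card) {x y : Fin N}
    (hx : x ∈ A) (hy : y ∈ A) (hxy : gfun A B x = gfun A B y) : x = y := by
  rw [gfun, dif_pos h, dif_pos hx] at hxy
  rw [gfun, dif_pos h, dif_pos hy] at hxy
  have := (Finset.equivOfCardEq h).injective (Subtype.ext hxy)
  exact congrArg Subtype.val this

/-- row set of the pattern, pushed through `π`. -/
noncomputable def sset (X : Finset (Fin N × Fin N)) (π : Equiv.Perm (Fin N)) : Finset (Fin N) :=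
  (X.image Prod.fst).image π

noncomputable def cset (X : Finset (Fin N × Fin N)) : Finset (Fin N) := X.image Prod.snd

/-- the switching function -/
noncomputable def hfun (X : Finset (Fin N × Fin N)) (π : Equiv.Perm (Fin N)) (x : Fin N) :
    Fin N :=
  if x ∈ sset X π then colOf X (π.symm x)
  else if x ∈ cset X then gfun (cset X \ sset X π) (sset X π \ cset X) x
  else x

lemma card_fst {X : Finset (Fin N × Fin N)} (hX : IsPattern X) :
    (X.image Prod.fst).card = X.card := by
  apply Finset.card_image_of_injOn
  intro p hp q hq hpq
  by_contra hne
  exact (hX p hp q hq hne).1 hpq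

lemma card_snd {X : Finset (Fin N × Fin N)} (hX : IsPattern X) :
    (X.image Prod.snd).card = X.card := by
  apply Finset.card_image_of_injOn
  intro p hp q hq hpq
  by_contra hne
  exact (hX p hp q hq hne).2 hpq

lemma card_sdiff_eq {X : Finset (Fin N × Fin N)} (hX : IsPattern X) (π : Equiv.Perm (Fin N)) :
    (cset X \ sset X π).card = (sset X π \ cset X).card := by
  have hs : (sset X π).card = (cset X).card := by
    rw [sset, cset, Finset.card_image_of_injective _ π.injective, card_fst hX, card_snd hX]
  have h1 := Finset.card_sdiff_add_card_inter (cset X) (sset X π)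
  have h2 := Finset.card_sdiff_add_card_inter (sset X π) (cset X)
  have h3 : (cset X ∩ sset X π).card = (sset X π ∩ cset X).card := by rw [Finset.inter_comm]
  omega

lemma symm_mem {X : Finset (Fin N × Fin N)} {π : Equiv.Perm (Fin N)} {x : Fin N}
    (hx : x ∈ sset X π) : π.symm x ∈ X.image Prod.fst := by
  obtain ⟨r, hr, hrx⟩ := Finset.mem_image.mp hx
  rw [← hrx, Equiv.symm_apply_apply]; exact hr

lemma hfun_mem_cset {X : Finset (Fin N × Fin N)} {π : Equiv.Perm (Fin N)} {x : Fin N}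
    (hx : x ∈ sset X π) : hfun X π x ∈ cset X := by
  rw [hfun, if_pos hx]; exact colOf_mem (symm_mem hx)

lemma hfun_mem_sdiff {X : Finset (Fin N × Fin N)} (hX : IsPattern X) {π : Equiv.Perm (Fin N)}
    {x : Fin N} (hx : x ∉ sset X π) (hx' : x ∈ cset X) :
    hfun X π x ∈ sset X π \ cset X := by
  rw [hfun, if_neg hx, if_pos hx']
  exact gfun_mem (card_sdiff_eq hX π) (Finset.mem_sdiff.mpr ⟨hx', hx⟩)

lemma hfun_fix {X : Finset (Fin N × Fin N)} {π : Equiv.Perm (Fin N)}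
    {x : Fin N} (hx : x ∉ sset X π) (hx' : x ∉ cset X) : hfun X π x = x := by
  rw [hfun, if_neg hx, if_neg hx']

lemma hfun_injective {X : Finset (Fin N × Fin N)} (hX : IsPattern X) (π : Equiv.Perm (Fin N)) :
    Function.Injective (hfun X π) := by
  intro x y hxy
  by_cases hx : x ∈ sset X π <;> by_cases hy : y ∈ sset X π
  · -- both branch 1
    have h1 : colOf X (π.symm x) = colOf X (π.symm y) := by
      rw [hfun, if_pos hx, hfun, if_pos hy] at hxy; exact hxy
    have := colOf_injOn hX (symm_mem hx) (symm_mem hy) h1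
    exact π.symm.injective this
  · have h1 : hfun X π x ∈ cset X := hfun_mem_cset hx
    by_cases hy' : y ∈ cset X
    · have h2 := hfun_mem_sdiff hX hy hy'
      rw [hxy] at h1
      exact absurd h1 (Finset.mem_sdiff.mp h2).2
    · rw [hfun_fix hy hy'] at hxy
      rw [hxy] at h1; exact absurd h1 hy'
  · have h1 : hfun X π y ∈ cset X := hfun_mem_cset hy
    by_cases hx' : x ∈ cset X
    · have h2 := hfun_mem_sdiff hX hx hx'
      rw [← hxy] at h1
      exact absurd h1 (Finset.mem_sdiff.mp h2).2
    · rw [hfun_fix hx hx'] at hxy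
      rw [← hxy] at h1; exact absurd h1 hx'
  · by_cases hx' : x ∈ cset X <;> by_cases hy' : y ∈ cset X
    · have h1 : gfun (cset X \ sset X π) (sset X π \ cset X) x
          = gfun (cset X \ sset X π) (sset X π \ cset X) y := by
        rw [hfun, if_neg hx, if_pos hx', hfun, if_neg hy, if_pos hy'] at hxy; exact hxy
      exact gfun_injOn (card_sdiff_eq hX π) (Finset.mem_sdiff.mpr ⟨hx', hx⟩)
        (Finset.mem_sdiff.mpr ⟨hy', hy⟩) h1
    · have h2 := hfun_mem_sdiff hX hx hx'
      rw [hxy, hfun_fix hy hy'] at h2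
      exact absurd (Finset.mem_sdiff.mp h2).1 hy
    · have h2 := hfun_mem_sdiff hX hy hy'
      rw [← hxy, hfun_fix hx hx'] at h2
      exact absurd (Finset.mem_sdiff.mp h2).1 hx
    · rw [hfun_fix hx hx', hfun_fix hy hy'] at hxy; exact hxy

/-- the switching permutation -/
noncomputable def hperm {X : Finset (Fin N × Fin N)} (hX : IsPattern X)
    (π : Equiv.Perm (Fin N)) : Equiv.Perm (Fin N) :=
  Equiv.ofBijective (hfun X π) (Finite.injective_iff_bijective.mp (hfun_injective hX π))

@[simp] lemma hperm_apply {X : Finset (Fin N × Fin N)} (hX : IsPattern X)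
    (π : Equiv.Perm (Fin N)) (x : Fin N) : hperm hX π x = hfun X π x := rfl

/-- K1: the switching permutation sends `π r` to the column paired with `r`. -/
lemma hperm_row {X : Finset (Fin N × Fin N)} (hX : IsPattern X) (π : Equiv.Perm (Fin N))
    {c : Fin N × Fin N} (hc : c ∈ X) : hperm hX π (π c.1) = c.2 := by
  have h1 : π c.1 ∈ sset X π :=
    Finset.mem_image_of_mem _ (Finset.mem_image_of_mem _ hc)
  rw [hperm_apply, hfun, if_pos h1, Equiv.symm_apply_apply]
  exact colOf_spec hX hc

/-- K3: the switching permutation only depends on `π` through its values on the rows of `X`. -/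
lemma hperm_congr {X : Finset (Fin N × Fin N)} (hX : IsPattern X) {π₁ π₂ : Equiv.Perm (Fin N)}
    (h : ∀ r ∈ X.image Prod.fst, π₁ r = π₂ r) : hperm hX π₁ = hperm hX π₂ := by
  have hss : sset X π₁ = sset X π₂ := Finset.image_congr h
  ext x
  rw [hperm_apply, hperm_apply, hfun, hfun, hss]
  by_cases hx : x ∈ sset X π₂
  · rw [if_pos hx, if_pos hx]
    obtain ⟨r, hr, hrx⟩ := Finset.mem_image.mp hx
    have h1 : π₁.symm x = r := by
      apply π₁.injective; rw [Equiv.apply_symm_apply, h r hr, hrx]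
    have h2 : π₂.symm x = r := by
      apply π₂.injective; rw [Equiv.apply_symm_apply, hrx]
    rw [h1, h2]
  · rw [if_neg hx, if_neg hx]

/-- a permutation containing the pattern maps non-rows to non-columns. -/
lemma sigma_compl {X : Finset (Fin N × Fin N)} {σ : Equiv.Perm (Fin N)}
    (hσ : ∀ c ∈ X, σ c.1 = c.2) {r : Fin N} (hr : r ∉ X.image Prod.fst) :
    σ r ∉ cset X := by
  intro hmem
  obtain ⟨c, hc, hcr⟩ := Finset.mem_image.mp hmem
  have : σ c.1 = σ r := by rw [hσ c hc, hcr]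
  have : c.1 = r := σ.injective this
  exact hr (Finset.mem_image.mpr ⟨c, hc, this⟩)


lemma hperm_mem_cset {X : Finset (Fin N × Fin N)} (hX : IsPattern X) {π : Equiv.Perm (Fin N)}
    {x : Fin N} (hx : x ∈ sset X π) : hperm hX π x ∈ cset X :=
  hfun_mem_cset hx

lemma hperm_fix {X : Finset (Fin N × Fin N)} (hX : IsPattern X) {π : Equiv.Perm (Fin N)}
    {x : Fin N} (hx : x ∉ sset X π) (hx' : x ∉ cset X) : hperm hX π x = x :=
  hfun_fix hx hx'

lemma cset_def (X : Finset (Fin N × Fin N)) : cset X = X.image Prod.snd := rfl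
lemma key {t : ℕ} {X : Finset (Fin N × Fin N)} {Xs : Fin t → Finset (Fin N × Fin N)}
    (hX : IsPattern X)
    (hadj : ∀ i : Fin t, ∀ c ∈ X, ∀ c' ∈ Xs i, c.1 ≠ c'.1 ∧ c.2 ≠ c'.2) :
    (Finset.univ.filter (fun σ : Equiv.Perm (Fin N) =>
        (∀ c ∈ X, σ c.1 = c.2) ∧ ∀ i, ¬ (∀ c ∈ Xs i, σ c.1 = c.2))).card
      * Fintype.card (Equiv.Perm (Fin N))
    ≤ (Finset.univ.filter fun σ : Equiv.Perm (Fin N) => ∀ c ∈ X, σ c.1 = c.2).card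
      * (Finset.univ.filter fun σ : Equiv.Perm (Fin N) =>
          ∀ i, ¬ (∀ c ∈ Xs i, σ c.1 = c.2)).card := by
  classical
  rw [← Finset.card_univ, ← Finset.card_product, ← Finset.card_product]
  apply Finset.card_le_card_of_injOn
    (fun p => (hperm hX p.2 * p.2, (hperm hX p.2)⁻¹ * p.1))
  · rintro ⟨σ, π⟩ hp
    simp only [Finset.mem_coe, Finset.mem_product, Finset.mem_filter, Finset.mem_univ, true_and] at hp ⊢
    obtain ⟨hA, hB⟩ := hp.1
    refine ⟨?_, ?_⟩
    · intro c hc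
      rw [Equiv.Perm.mul_apply]
      exact hperm_row hX π hc
    · intro i hcon
      apply hB i
      intro c hc
      have hrow : c.1 ∉ X.image Prod.fst := by
        intro hmem
        obtain ⟨p, hpX, hp1⟩ := Finset.mem_image.mp hmem
        exact (hadj i p hpX c hc).1 hp1
      have hcol : c.2 ∉ cset X := by
        rw [cset_def]
        intro hmem
        obtain ⟨p, hpX, hp2⟩ := Finset.mem_image.mp hmem
        exact (hadj i p hpX c hc).2 hp2
      have hπ' : (hperm hX π)⁻¹ (σ c.1) = c.2 := by
        have := hcon c hc
        rwa [Equiv.Perm.mul_apply] at this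
      have hσc : σ c.1 = hperm hX π c.2 := by
        rw [← hπ', Equiv.Perm.inv_def, Equiv.apply_symm_apply]
      by_cases hs : c.2 ∈ sset X π
      · exact absurd (hσc ▸ hperm_mem_cset hX hs) (sigma_compl hA hrow)
      · rw [hσc, hperm_fix hX hs hcol]
  · rintro ⟨σ₁, π₁⟩ h₁ ⟨σ₂, π₂⟩ h₂ heq
    simp only [Finset.coe_filter, Set.mem_setOf_eq, Finset.mem_product, Finset.mem_filter,
      Finset.mem_univ, true_and, Finset.mem_coe] at h₁ h₂
    have hA₁ : ∀ c ∈ X, σ₁ c.1 = c.2 := h₁.1.1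
    have hA₂ : ∀ c ∈ X, σ₂ c.1 = c.2 := h₂.1.1
    have e1 : hperm hX π₁ * π₁ = hperm hX π₂ * π₂ := congrArg Prod.fst heq
    have e2 : (hperm hX π₁)⁻¹ * σ₁ = (hperm hX π₂)⁻¹ * σ₂ := congrArg Prod.snd heq
    have hr_eq : ∀ r ∈ X.image Prod.fst, π₁ r = π₂ r := by
      intro r hr
      have hcr : (r, colOf X r) ∈ X := colOf_pair hr
      have k₁ : (hperm hX π₁)⁻¹ (σ₁ r) = π₁ r := by
        apply (hperm hX π₁).injective
        rw [Equiv.Perm.inv_def, Equiv.apply_symm_apply]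
        rw [hperm_row hX π₁ hcr, hA₁ _ hcr]
      have k₂ : (hperm hX π₂)⁻¹ (σ₂ r) = π₂ r := by
        apply (hperm hX π₂).injective
        rw [Equiv.Perm.inv_def, Equiv.apply_symm_apply]
        rw [hperm_row hX π₂ hcr, hA₂ _ hcr]
      have := congrArg (fun f : Equiv.Perm (Fin N) => f r) e2
      simp only [Equiv.Perm.mul_apply] at this
      rw [k₁, k₂] at this
      exact this
    have hpe : hperm hX π₁ = hperm hX π₂ := hperm_congr hX hr_eq
    have hππ : π₁ = π₂ := by
      rw [hpe] at e1
      exact mul_left_cancel e1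
    have hσσ : σ₁ = σ₂ := by
      rw [hpe] at e2
      exact mul_left_cancel e2
    simp [hππ, hσσ]

end Stmt4Aux

/-- Negative correlation for patterns in a uniform random permutation
(Proposition `ESprop`): if the pattern `X` shares no line with any of the
patterns `X₁,…,X_t`, then conditioning on avoiding all the `Xᵢ` can only
decrease the probability of containing `X`. -/
theorem stmt_4 (N t : ℕ) (X : Finset (Fin N × Fin N)) (Xs : Fin t → Finset (Fin N × Fin N))
    (hX : ∀ c ∈ X, ∀ c' ∈ X, c ≠ c' → c.1 ≠ c'.1 ∧ c.2 ≠ c'.2)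
    (hXs : ∀ i : Fin t, ∀ c ∈ Xs i, ∀ c' ∈ Xs i, c ≠ c' → c.1 ≠ c'.1 ∧ c.2 ≠ c'.2)
    (hadj : ∀ i : Fin t, ∀ c ∈ X, ∀ c' ∈ Xs i, c.1 ≠ c'.1 ∧ c.2 ≠ c'.2)
    (hpos : 0 < (Finset.univ.filter
        (fun σ : Equiv.Perm (Fin N) => ∀ i : Fin t, ¬ (∀ c ∈ Xs i, σ c.1 = c.2))).card) :
    ((Finset.univ.filter (fun σ : Equiv.Perm (Fin N) =>
          (∀ c ∈ X, σ c.1 = c.2) ∧ ∀ i : Fin t, ¬ (∀ c ∈ Xs i, σ c.1 = c.2))).card : ℝ) /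
        ((Finset.univ.filter (fun σ : Equiv.Perm (Fin N) =>
          ∀ i : Fin t, ¬ (∀ c ∈ Xs i, σ c.1 = c.2))).card : ℝ) ≤
      ((Finset.univ.filter (fun σ : Equiv.Perm (Fin N) =>
          ∀ c ∈ X, σ c.1 = c.2)).card : ℝ) / (Fintype.card (Equiv.Perm (Fin N)) : ℝ) := by
  have hkey := Stmt4Aux.key (t := t) (Xs := Xs) hX hadj
  have hb : (0 : ℝ) < ((Finset.univ.filter (fun σ : Equiv.Perm (Fin N) =>
      ∀ i : Fin t, ¬ (∀ c ∈ Xs i, σ c.1 = c.2))).card : ℝ) := by exact_mod_cast hpos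
  have hn : (0 : ℝ) < (Fintype.card (Equiv.Perm (Fin N)) : ℝ) := by
    exact_mod_cast Fintype.card_pos
  rw [div_le_div_iff₀ hb hn]
  exact_mod_cast hkey
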